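/- If Δ ≥ 100·ln(n)/ε⁴, then with probability at least 1 − 1/n^{32}, every vertex u ∈ V satisfies |{e ∈ N(u) : X_e = T+1}| < ε(1 + ε)·Δ. -/

import Mathlib

open MeasureTheory ProbabilityTheory

lemma aux_exp_upper {y : ℝ} (h0 : 0 ≤ y) (h1 : y ≤ 1) :
    Real.exp y ≤ 1 + y + y ^ 2 / 2 + (2 / 9) * y ^ 3 := by
  have h := Real.exp_bound (x := y) (by rw [abs_of_nonneg h0]; exact h1) (n := 3) (by norm_num)
  rw [abs_of_nonneg h0] at h
  have h2 := (abs_sub_le_iff.1 h).1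
  have hs : ∑ m ∈ Finset.range 3, y ^ m / (m.factorial : ℝ) = 1 + y + y ^ 2 / 2 := by
    rw [Finset.sum_range_succ, Finset.sum_range_succ, Finset.sum_range_succ,
      Finset.sum_range_zero]
    norm_num [Nat.factorial]
  rw [hs] at h2
  norm_num [Nat.factorial] at h2
  nlinarith

lemma aux_exp_lower {y : ℝ} (h0 : 0 ≤ y) (h1 : y ≤ 1) :
    1 - y + y ^ 2 / 2 - (2 / 9) * y ^ 3 ≤ Real.exp (-y) := by
  have h := Real.exp_bound (x := -y) (by rw [abs_neg, abs_of_nonneg h0]; exact h1) (n := 3) (by norm_num)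
  rw [abs_neg, abs_of_nonneg h0] at h
  have h2 := (abs_sub_le_iff.1 h).2
  have hs : ∑ m ∈ Finset.range 3, (-y) ^ m / (m.factorial : ℝ) = 1 - y + y ^ 2 / 2 := by
    rw [Finset.sum_range_succ, Finset.sum_range_succ, Finset.sum_range_succ,
      Finset.sum_range_zero]
    norm_num [Nat.factorial]; ring
  rw [hs] at h2
  norm_num [Nat.factorial] at h2
  nlinarith

lemma aux_log_ten : (2.1 : ℝ) ≤ Real.log 10 := by
  rw [Real.le_log_iff_exp_le (by norm_num)]
  have h1 : Real.exp (2.1 : ℝ) = Real.exp 1 * Real.exp 1 * Real.exp (0.1 : ℝ) := by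
    rw [← Real.exp_add, ← Real.exp_add]; norm_num
  have he : Real.exp 1 < 2.7182818286 := Real.exp_one_lt_d9
  have h3 : (0.9 : ℝ) ≤ Real.exp (-(0.1:ℝ)) := by
    have := Real.add_one_le_exp (-(0.1:ℝ)); linarith
  have h2 : Real.exp (0.1 : ℝ) ≤ 1 / 0.9 := by
    rw [show ((0.1:ℝ)) = -(-(0.1:ℝ)) by norm_num, Real.exp_neg]
    rw [inv_le_comm₀ (Real.exp_pos _) (by norm_num)]
    linarith
  have h0 : (0:ℝ) < Real.exp 1 := Real.exp_pos 1
  calc Real.exp (2.1:ℝ) = Real.exp 1 * Real.exp 1 * Real.exp (0.1:ℝ) := h1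
    _ ≤ 2.7182818286 * 2.7182818286 * (1/0.9) := by
        apply mul_le_mul (mul_le_mul he.le he.le h0.le (by norm_num)) h2 (Real.exp_pos _).le
        norm_num
    _ ≤ 10 := by norm_num

lemma aux_p_le {ε : ℝ} (hε0 : 0 < ε) (hε1 : ε ≤ 1 / 10) :
    (1 - ε) ^ (⌊(1 / ε) * Real.log (1 / ε)⌋₊ : ℕ) ≤ ε := by
  set L := Real.log (1 / ε) with hLdef
  set T := ⌊(1 / ε) * L⌋₊ with hTdef
  have h10 : (10 : ℝ) ≤ 1 / ε := by
    rw [le_div_iff₀ hε0]; linarith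
  have hL : (2.1 : ℝ) ≤ L := le_trans aux_log_ten (Real.log_le_log (by norm_num) h10)
  have h1ε : (0 : ℝ) < 1 - ε := by linarith
  have hTfl : (1 / ε) * L - 1 < (T : ℝ) := Nat.sub_one_lt_floor _
  have hlog : Real.log (1 - ε) ≤ -(ε + ε ^ 2 / 2) := by
    have hy0 : (0:ℝ) ≤ ε + ε ^ 2 / 2 := by nlinarith
    have hy1 : ε + ε ^ 2 / 2 ≤ 1 := by nlinarith
    have hexp := aux_exp_lower hy0 hy1
    have hcube : (1 + ε / 2) ^ 3 ≤ 9 / 4 := by nlinarith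
    have hpoly : (2 / 9) * (ε + ε ^ 2 / 2) ^ 3 ≤ ε ^ 3 / 2 := by
      have hε3 : (0:ℝ) ≤ ε ^ 3 := by positivity
      nlinarith [mul_nonneg hε3 (sub_nonneg.2 hcube)]
    have h2 : 1 - ε ≤ Real.exp (-(ε + ε ^ 2 / 2)) := by
      nlinarith [hexp, hpoly, pow_nonneg hε0.le 4]
    exact (Real.log_le_iff_le_exp h1ε).2 h2
  have hlneg : Real.log (1 - ε) < 0 := Real.log_neg (by linarith) (by linarith)
  have key : (T : ℝ) * Real.log (1 - ε) ≤ -L := by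
    have h2 : (T : ℝ) * Real.log (1 - ε) ≤ ((1 / ε) * L - 1) * Real.log (1 - ε) :=
      mul_le_mul_of_nonpos_right hTfl.le hlneg.le
    have h3 : ((1 / ε) * L - 1) * Real.log (1 - ε) ≤ ((1 / ε) * L - 1) * (-(ε + ε ^ 2 / 2)) := by
      apply mul_le_mul_of_nonneg_left hlog
      nlinarith
    have h5 : (1 / ε) * ε = 1 := by field_simp
    have hEq : ((1 / ε) * L - 1) * (-(ε + ε ^ 2 / 2)) = -L - L * ε / 2 + ε + ε ^ 2 / 2 := by
      field_simp; ring
    have h4 : ((1 / ε) * L - 1) * (-(ε + ε ^ 2 / 2)) ≤ -L := by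
      rw [hEq]
      nlinarith [mul_nonneg hε0.le (show (0:ℝ) ≤ L - 2 - ε by linarith)]
    linarith
  have hpow : (1 - ε) ^ T = Real.exp ((T : ℝ) * Real.log (1 - ε)) := by
    rw [Real.exp_nat_mul, Real.exp_log h1ε]
  rw [hpow]
  calc Real.exp ((T : ℝ) * Real.log (1 - ε)) ≤ Real.exp (-L) := Real.exp_le_exp.2 key
    _ = ε := by
        rw [hLdef, one_div, Real.log_inv, neg_neg, Real.exp_log hε0]

lemma aux_final (ε Δ : ℝ) (n : ℕ) (hn : 2 ≤ n) (hε0 : 0 < ε) (hε1 : ε ≤ 1 / 10)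
    (hΔ : Δ ≥ 100 * Real.log n / ε ^ 4) (d p : ℝ) (hd0 : 0 ≤ d) (hdΔ : d ≤ Δ)
    (hp0 : 0 ≤ p) (hpε : p ≤ ε) :
    Real.exp (-(ε / 2) * (ε * (1 + ε) * Δ)) * Real.exp (d * ((Real.exp (ε / 2) - 1) * p)) ≤
      1 / (n : ℝ) ^ 33 := by
  have hlogn : (0 : ℝ) < Real.log n := by
    apply Real.log_pos; exact_mod_cast by omega
  have hΔ0 : 0 < Δ := lt_of_lt_of_le (by positivity) hΔ
  have he : Real.exp (ε / 2) - 1 ≤ ε / 2 + ε ^ 2 / 8 + ε ^ 3 / 36 := by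
    have := aux_exp_upper (y := ε / 2) (by linarith) (by linarith)
    nlinarith
  have he0 : 0 ≤ Real.exp (ε / 2) - 1 := by
    have := Real.add_one_le_exp (ε / 2); linarith
  have hmain : -(ε / 2) * (ε * (1 + ε) * Δ) + d * ((Real.exp (ε / 2) - 1) * p) ≤
      -33 * Real.log n := by
    have h1 : d * ((Real.exp (ε / 2) - 1) * p) ≤ Δ * ((ε / 2 + ε ^ 2 / 8 + ε ^ 3 / 36) * ε) := by
      apply mul_le_mul hdΔ _ (by positivity) hΔ0.le
      apply mul_le_mul he hpε hp0 (by nlinarith)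
    have h2 : -(ε / 2) * (ε * (1 + ε) * Δ) + Δ * ((ε / 2 + ε ^ 2 / 8 + ε ^ 3 / 36) * ε) ≤
        -(Δ * ε ^ 3 / 3) := by
      have hin : (0:ℝ) ≤ ε ^ 3 / 24 - ε ^ 4 / 36 := by nlinarith [pow_nonneg hε0.le 3]
      nlinarith [mul_nonneg hΔ0.le hin]
    have h3 : 100 * Real.log n / ε ^ 4 * ε ^ 3 ≤ Δ * ε ^ 3 := by
      apply mul_le_mul_of_nonneg_right hΔ (by positivity)
    have h4 : 100 * Real.log n / ε ^ 4 * ε ^ 3 = 100 * Real.log n / ε := by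
      field_simp
    have h5 : 100 * Real.log n / ε ≥ 1000 * Real.log n := by
      rw [ge_iff_le, le_div_iff₀ hε0]; nlinarith
    linarith
  calc Real.exp (-(ε / 2) * (ε * (1 + ε) * Δ)) * Real.exp (d * ((Real.exp (ε / 2) - 1) * p))
      = Real.exp (-(ε / 2) * (ε * (1 + ε) * Δ) + d * ((Real.exp (ε / 2) - 1) * p)) := by
        rw [Real.exp_add]
    _ ≤ Real.exp (-33 * Real.log n) := Real.exp_le_exp.2 hmain
    _ = 1 / (n : ℝ) ^ 33 := by
        rw [show (-33 : ℝ) * Real.log n = -(33 * Real.log n) by ring, Real.exp_neg,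
          show (33 : ℝ) * Real.log n = (33 : ℕ) * Real.log n by norm_num,
          Real.exp_nat_mul, Real.exp_log (by positivity : (0:ℝ) < (n:ℝ))]
        rw [one_div]

theorem stmt_11 {V : Type*} [Fintype V] [DecidableEq V]
    (G : SimpleGraph V) [DecidableRel G.Adj]
    {Ω : Type*} [MeasurableSpace Ω] (μ : Measure Ω) [IsProbabilityMeasure μ]
    (ε Δ : ℝ) (hε0 : 0 < ε) (hε1 : ε ≤ 1 / 10)
    (T : ℕ) (hT : T = ⌊(1 / ε) * Real.log (1 / ε)⌋₊)
    (n : ℕ) (hn : n = Fintype.card V)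
    (hdeg : ∀ u : V, (G.degree u : ℝ) ≤ Δ)
    (hΔ : Δ ≥ 100 * Real.log n / ε ^ 4)
    (X : Sym2 V → Ω → ℕ)
    (hmeas : ∀ e, Measurable (X e))
    (hindep : iIndepFun
      (fun e : G.edgeSet => X e) μ)
    (hdist : ∀ e ∈ G.edgeSet, ∀ i : ℕ, 1 ≤ i → i ≤ T →
      μ {ω | X e ω = i} = ENNReal.ofReal (ε * (1 - ε) ^ (i - 1)))
    (hdistT : ∀ e ∈ G.edgeSet, μ {ω | X e ω = T + 1} = ENNReal.ofReal ((1 - ε) ^ T)) :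
    ENNReal.ofReal (1 - 1 / (n : ℝ) ^ 32) ≤
      μ {ω | ∀ u : V,
        (({e | e ∈ G.incidenceSet u ∧ X e ω = T + 1}.ncard : ℝ)) < ε * (1 + ε) * Δ} := by
  classical
  rcases le_or_gt n 1 with hn1 | hn2
  · -- trivial small cases
    interval_cases n
    · have hV : IsEmpty V := Fintype.card_eq_zero_iff.mp hn.symm
      have hset : {ω : Ω | ∀ u : V,
          (({e | e ∈ G.incidenceSet u ∧ X e ω = T + 1}.ncard : ℝ)) < ε * (1 + ε) * Δ}
          = Set.univ := Set.eq_univ_of_forall (fun ω => fun u => (hV.false u).elim)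
      rw [hset, measure_univ]
      simp
    · simp
  -- main case : 2 ≤ n
  set t : ℝ := ε / 2 with htdef
  have ht0 : 0 ≤ t := by positivity
  set p : ℝ := (1 - ε) ^ T with hpdef
  have hp0 : 0 ≤ p := by
    apply pow_nonneg; linarith
  have hpε : p ≤ ε := by rw [hpdef, hT]; exact aux_p_le hε0 hε1
  set a : ℝ := ε * (1 + ε) * Δ with hadef
  -- the indicator variables
  set Z : G.edgeSet → Ω → ℝ := fun e ω => if X e ω = T + 1 then 1 else 0 with hZdef
  have hZmeas : ∀ e : G.edgeSet, Measurable (Z e) := fun e =>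
    Measurable.ite (hmeas e (measurableSet_singleton (T + 1))) measurable_const measurable_const
  have hZindep : iIndepFun Z μ :=
    hindep.comp (fun _ (k : ℕ) => if k = T + 1 then (1 : ℝ) else 0)
      (fun _ => measurable_from_top)
  have hZ01 : ∀ (e : G.edgeSet) (ω : Ω), 0 ≤ Z e ω ∧ Z e ω ≤ 1 := by
    intro e ω; by_cases h : X e ω = T + 1 <;> simp [hZdef, h]
  -- mgf of single indicator
  have hmgf_fun : ∀ e : G.edgeSet, (fun ω => Real.exp (t * Z e ω)) =
      fun ω => 1 + Set.indicator {ω | X (e : Sym2 V) ω = T + 1}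
        (fun _ => Real.exp t - 1) ω := by
    intro e
    ext ω
    by_cases h : X (e : Sym2 V) ω = T + 1
    · simp [hZdef, h, Set.indicator_of_mem, Set.mem_setOf_eq]
    · simp [hZdef, h, Set.indicator_of_notMem, Set.mem_setOf_eq, Real.exp_zero]
  have hAmeas : ∀ e : G.edgeSet, MeasurableSet {ω | X (e : Sym2 V) ω = T + 1} :=
    fun e => hmeas e (measurableSet_singleton (T + 1))
  have hint : ∀ e : G.edgeSet, Integrable (fun ω => Real.exp (t * Z e ω)) μ := by
    intro e
    rw [hmgf_fun e]
    exact (integrable_const 1).add ((integrable_const _).indicator (hAmeas e))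
  have hmgf : ∀ e : G.edgeSet, mgf (Z e) μ t = 1 + (Real.exp t - 1) * p := by
    intro e
    rw [mgf, hmgf_fun e, integral_add (integrable_const 1)
      ((integrable_const _).indicator (hAmeas e)), integral_const,
      integral_indicator_const _ (hAmeas e), measureReal_def, measureReal_def, hdistT e e.2, measure_univ,
      ENNReal.toReal_ofReal hp0]
    simp [mul_comm]
  -- per-vertex Chernoff bound
  have hvert : ∀ u : V,
      μ {ω | a ≤ (∑ e ∈ (G.incidenceFinset u).subtype (· ∈ G.edgeSet), Z e) ω}
        ≤ ENNReal.ofReal (1 / (n : ℝ) ^ 33) := by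
    intro u
    set S' : Finset G.edgeSet := (G.incidenceFinset u).subtype (· ∈ G.edgeSet) with hS'def
    set F : Ω → ℝ := ∑ e ∈ S', Z e with hFdef
    have hFapp : ∀ ω, F ω = ∑ e ∈ S', Z e ω := by
      intro ω; rw [hFdef]; exact Finset.sum_apply ω S' Z
    have hFmeas : Measurable F := by
      have : Measurable (fun ω => ∑ e ∈ S', Z e ω) :=
        Finset.measurable_sum S' (fun e _ => hZmeas e)
      convert this using 1
      ext ω; exact hFapp ω
    have hcard : (S'.card : ℝ) ≤ Δ := by
      have h1 : S'.card = (G.incidenceFinset u).card := by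
        rw [hS'def, Finset.card_subtype, Finset.filter_true_of_mem]
        intro e he
        exact G.incidenceSet_subset u ((SimpleGraph.mem_incidenceFinset G u e).mp he)
      rw [h1, SimpleGraph.card_incidenceFinset_eq_degree]
      exact hdeg u
    have hFbound : ∀ ω, F ω ≤ S'.card := by
      intro ω
      rw [hFapp ω]
      calc ∑ e ∈ S', Z e ω ≤ ∑ _e ∈ S', (1 : ℝ) :=
            Finset.sum_le_sum (fun e _ => (hZ01 e ω).2)
        _ = S'.card := by simp
    have hintF : Integrable (fun ω => Real.exp (t * F ω)) μ := by
      apply Integrable.mono' (integrable_const (Real.exp (t * S'.card)))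
      · exact ((hFmeas.const_mul t).exp).aestronglyMeasurable
      · filter_upwards with ω
        rw [Real.norm_eq_abs, abs_of_pos (Real.exp_pos _)]
        exact Real.exp_le_exp.2 (mul_le_mul_of_nonneg_left (hFbound ω) ht0)
    have hchern := measure_ge_le_exp_mul_mgf (μ := μ) (X := F) a ht0 hintF
    have hmgfF : mgf F μ t ≤ Real.exp (S'.card * ((Real.exp t - 1) * p)) := by
      rw [hFdef, hZindep.mgf_sum hZmeas S']
      have h1 : ∏ e ∈ S', mgf (Z e) μ t = (1 + (Real.exp t - 1) * p) ^ S'.card := by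
        rw [Finset.prod_congr rfl (fun e _ => hmgf e), Finset.prod_const]
      rw [h1]
      have h2 : (1 + (Real.exp t - 1) * p) ≤ Real.exp ((Real.exp t - 1) * p) := by
        have := Real.add_one_le_exp ((Real.exp t - 1) * p); linarith
      have h3 : (0:ℝ) ≤ 1 + (Real.exp t - 1) * p := by
        have h4 : 0 ≤ Real.exp t - 1 := by
          have := Real.add_one_le_exp t; linarith
        positivity
      calc (1 + (Real.exp t - 1) * p) ^ S'.card
          ≤ (Real.exp ((Real.exp t - 1) * p)) ^ S'.card := pow_le_pow_left₀ h3 h2 _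
        _ = Real.exp (S'.card * ((Real.exp t - 1) * p)) := (Real.exp_nat_mul _ _).symm
    have hfinal : (μ {ω | a ≤ F ω}).toReal ≤ 1 / (n : ℝ) ^ 33 := by
      calc (μ {ω | a ≤ F ω}).toReal ≤ Real.exp (-t * a) * mgf F μ t := hchern
        _ ≤ Real.exp (-t * a) * Real.exp (S'.card * ((Real.exp t - 1) * p)) := by
            apply mul_le_mul_of_nonneg_left hmgfF (Real.exp_pos _).le
        _ ≤ 1 / (n : ℝ) ^ 33 := by
            exact aux_final ε Δ n hn2 hε0 hε1 hΔ S'.card p (Nat.cast_nonneg _) hcard hp0 hpε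
    rw [ENNReal.le_ofReal_iff_toReal_le (measure_ne_top μ _) (by positivity)]
    exact hfinal
  -- the pointwise count identity
  have hcount : ∀ (u : V) (ω : Ω),
      (({e | e ∈ G.incidenceSet u ∧ X e ω = T + 1}.ncard : ℝ)) =
        (∑ e ∈ (G.incidenceFinset u).subtype (· ∈ G.edgeSet), Z e) ω := by
    intro u ω
    rw [Finset.sum_apply]
    have hsub : ∀ e ∈ G.incidenceFinset u, e ∈ G.edgeSet := fun e he =>
      G.incidenceSet_subset u ((SimpleGraph.mem_incidenceFinset G u e).mp he)
    have h1 : (∑ e ∈ (G.incidenceFinset u).subtype (· ∈ G.edgeSet), Z e ω) =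
        ∑ e ∈ G.incidenceFinset u, (if X e ω = T + 1 then (1:ℝ) else 0) :=
      Finset.sum_subtype_of_mem (fun e => if X e ω = T + 1 then (1:ℝ) else 0) hsub
    rw [h1]
    have h2 : {e | e ∈ G.incidenceSet u ∧ X e ω = T + 1} =
        ↑((G.incidenceFinset u).filter (fun e => X e ω = T + 1)) := by
      ext e; simp [SimpleGraph.mem_incidenceFinset]
    rw [h2, Set.ncard_coe_finset, Finset.card_filter]
    push_cast
    rfl
  -- assembly
  set Bad : V → Set Ω := fun u =>
    {ω | a ≤ (∑ e ∈ (G.incidenceFinset u).subtype (· ∈ G.edgeSet), Z e) ω} with hBaddef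
  have hBadMeas : ∀ u, MeasurableSet (Bad u) := by
    intro u
    apply measurableSet_le measurable_const
    have hfun : (∑ e ∈ (G.incidenceFinset u).subtype (· ∈ G.edgeSet), Z e) =
        fun ω => ∑ e ∈ (G.incidenceFinset u).subtype (· ∈ G.edgeSet), Z e ω := by
      ext ω; exact Finset.sum_apply ω _ Z
    rw [hfun]
    exact Finset.measurable_sum _ (fun e _ => hZmeas e)
  have hset : {ω : Ω | ∀ u : V,
      (({e | e ∈ G.incidenceSet u ∧ X e ω = T + 1}.ncard : ℝ)) < a}
      = (⋃ u, Bad u)ᶜ := by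
    ext ω
    simp only [Set.mem_setOf_eq, Set.mem_compl_iff, Set.mem_iUnion, not_exists, hBaddef]
    constructor
    · intro h u hu
      rw [← hcount u ω] at hu
      exact absurd hu (not_le.2 (h u))
    · intro h u
      rw [hcount u ω]
      exact not_le.1 (h u)
  have hcompl : μ ((⋃ u, Bad u)ᶜ) = 1 - μ (⋃ u, Bad u) := by
    rw [measure_compl (MeasurableSet.iUnion hBadMeas) (measure_ne_top _ _), measure_univ]
  have hUnion : μ (⋃ u, Bad u) ≤ ENNReal.ofReal (1 / (n : ℝ) ^ 32) := by
    calc μ (⋃ u, Bad u) ≤ ∑ u : V, μ (Bad u) := measure_iUnion_fintype_le μ Bad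
      _ ≤ ∑ _u : V, ENNReal.ofReal (1 / (n : ℝ) ^ 33) :=
          Finset.sum_le_sum (fun u _ => hvert u)
      _ = (n : ENNReal) * ENNReal.ofReal (1 / (n : ℝ) ^ 33) := by
          rw [Finset.sum_const, Finset.card_univ, ← hn, nsmul_eq_mul]
      _ = ENNReal.ofReal (n * (1 / (n : ℝ) ^ 33)) := by
          rw [ENNReal.ofReal_mul (by positivity), ENNReal.ofReal_natCast]
      _ = ENNReal.ofReal (1 / (n : ℝ) ^ 32) := by
          congr 1
          have hne : (n : ℝ) ≠ 0 := by positivity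
          field_simp
  rw [hset, hcompl]
  have h1 : ENNReal.ofReal (1 - 1 / (n : ℝ) ^ 32) = 1 - ENNReal.ofReal (1 / (n : ℝ) ^ 32) := by
    rw [ENNReal.ofReal_sub _ (by positivity), ENNReal.ofReal_one]
  rw [h1]
  exact tsub_le_tsub_left hUnion 1
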